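/- Let d ≥ 2 and let A, B, C be d×d complex matrices with equal diagonals such that every entry of A is a nonnegative real number, B and C are Hermitian, and √(A_ii·A_jj)/(d−1) + √(A_ij·A_ji) − |B_ij| − |C_ij| ≥ 0 for all i ≠ j. Then the map Φ^{(3)}_{(A,B,C)} is decomposable: there exist positive semidefinite matrices P, Q ∈ M_d(ℂ)⊗M_d(ℂ) with X^{(3)}_{(A,B,C)} = P + Q^Γ. In particular, Φ^{(3)}_{(A,B,C)} is positive. -/

import Mathlib

open Matrix
open scoped ComplexOrder

/-- The LDOI matrix `X^{(3)}_{(A,B,C)}` associated to a triple of `d × d` matrices;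
it is the Choi matrix of the DOC map `Φ^{(3)}_{(A,B,C)}`. -/
def X3 {d : ℕ} (A B C : Matrix (Fin d) (Fin d) ℂ) :
    Matrix (Fin d × Fin d) (Fin d × Fin d) ℂ :=
  Matrix.of fun p q =>
    if p.1 = q.1 ∧ p.2 = q.2 then A p.1 p.2
    else if p.1 = p.2 ∧ q.1 = q.2 then B p.1 q.1
    else if p.1 = q.2 ∧ p.2 = q.1 then C p.1 q.1
    else 0

/-- The partial transpose (on the second factor) of a bipartite matrix:
`⟨ik|X^Γ|jl⟩ = ⟨il|X|jk⟩`. -/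
def partialTranspose {d : ℕ} (X : Matrix (Fin d × Fin d) (Fin d × Fin d) ℂ) :
    Matrix (Fin d × Fin d) (Fin d × Fin d) ℂ :=
  Matrix.of fun p q => X (p.1, q.2) (q.1, p.2)

/-- The DOC map `Φ^{(3)}_{(A,B,C)}`:
`Φ(Z) = Diag(A z) + B̃ ⊙ Z + C̃ ⊙ Zᵀ`, where `z = diag Z` and `B̃, C̃` are `B, C`
with their diagonals set to zero. -/
noncomputable def Phi3 {d : ℕ} (A B C : Matrix (Fin d) (Fin d) ℂ)
    (Z : Matrix (Fin d) (Fin d) ℂ) : Matrix (Fin d) (Fin d) ℂ :=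
  Matrix.diagonal (fun i => ∑ j, A i j * Z j j) +
    (Matrix.of fun i j => if i = j then 0 else B i j) ⊙ Z +
    (Matrix.of fun i j => if i = j then 0 else C i j) ⊙ Zᵀ

namespace Stmt18

open Finset
open scoped ComplexConjugate


lemma qf_eq {ι : Type*} [Fintype ι] (M : Matrix ι ι ℂ) (x : ι → ℂ) :
    star x ⬝ᵥ M *ᵥ x = ∑ p, ∑ q, conj (x p) * M p q * x q := by
  simp only [dotProduct, mulVec, Pi.star_apply, RCLike.star_def, Finset.mul_sum, mul_assoc]

lemma quad_nonneg (a b : ℝ) (c u w : ℂ) (ha : 0 ≤ a) (hb : 0 ≤ b)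
    (hc : ‖c‖ ^ 2 ≤ a * b) :
    0 ≤ ((a : ℂ) * (conj u * u) + c * (conj u * w)) +
        ((b : ℂ) * (conj w * w) + conj c * (conj w * u)) := by
  have key : ((a : ℂ) * (conj u * u) + c * (conj u * w)) +
      ((b : ℂ) * (conj w * w) + conj c * (conj w * u)) =
      ((a * Complex.normSq u + b * Complex.normSq w
        + 2 * (c * (conj u * w)).re : ℝ) : ℂ) := by
    have h1 : conj u * u = (Complex.normSq u : ℂ) := by
      rw [mul_comm, Complex.mul_conj]
    have h2 : conj w * w = (Complex.normSq w : ℂ) := by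
      rw [mul_comm, Complex.mul_conj]
    have h3 : conj c * (conj w * u) = conj (c * (conj u * w)) := by
      simp [mul_comm]
    have h4 : c * (conj u * w) + conj (c * (conj u * w)) =
        ((2 * (c * (conj u * w)).re : ℝ) : ℂ) := by
      rw [Complex.add_conj]
    rw [h1, h2, h3]
    rw [show ((a:ℂ) * (Complex.normSq u : ℂ) + c * (conj u * w)) +
        ((b:ℂ) * (Complex.normSq w : ℂ) + conj (c * (conj u * w))) =
        (a:ℂ) * (Complex.normSq u : ℂ) + (b:ℂ) * (Complex.normSq w : ℂ) +
        (c * (conj u * w) + conj (c * (conj u * w))) from by ring, h4]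
    push_cast; ring
  rw [key, Complex.le_def]
  refine ⟨?_, by simp⟩
  simp only [Complex.zero_re, Complex.ofReal_re, Complex.zero_im, Complex.ofReal_im]
  set x := ‖u‖ with hx
  set y := ‖w‖ with hy
  set s := ‖c‖ with hs
  have hnu : Complex.normSq u = x ^ 2 := by rw [hx, Complex.sq_norm]
  have hnw : Complex.normSq w = y ^ 2 := by rw [hy, Complex.sq_norm]
  have habs : ‖c * (conj u * w)‖ = s * x * y := by
    rw [norm_mul, norm_mul, Complex.norm_conj, ← hx, ← hy, ← hs, mul_assoc]
  have h6 : |(c * (conj u * w)).re| ≤ s * x * y := habs ▸ Complex.abs_re_le_norm _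
  have hre : -(s * x * y) ≤ (c * (conj u * w)).re := by
    have := neg_abs_le (c * (conj u * w)).re
    linarith [abs_nonneg (c * (conj u * w)).re, neg_le_neg (le_abs_self (c * (conj u * w)).re)]
  have hsle : s ≤ Real.sqrt a * Real.sqrt b := by
    have : s = Real.sqrt (s ^ 2) := by
      rw [Real.sqrt_sq (norm_nonneg c)]
    rw [this, ← Real.sqrt_mul ha b]
    exact Real.sqrt_le_sqrt hc
  have hx0 : 0 ≤ x := norm_nonneg u
  have hy0 : 0 ≤ y := norm_nonneg w
  have hs0 : 0 ≤ s := norm_nonneg c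
  have hsa := Real.sq_sqrt ha
  have hsb := Real.sq_sqrt hb
  nlinarith [sq_nonneg (Real.sqrt a * x - Real.sqrt b * y), Real.sqrt_nonneg a,
    Real.sqrt_nonneg b, mul_nonneg hx0 hy0, mul_le_mul_of_nonneg_right hsle (mul_nonneg hx0 hy0)]


lemma offDiag_eq_filter {ι : Type*} [Fintype ι] [DecidableEq ι] :
    (Finset.univ : Finset ι).offDiag
      = (Finset.univ ×ˢ Finset.univ).filter (fun p => p.1 ≠ p.2) := by
  ext p; simp [Finset.mem_offDiag]

lemma sum_offDiag_eq {ι M : Type*} [Fintype ι] [DecidableEq ι] [AddCommMonoid M]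
    (h : ι → ι → M) :
    ∑ p ∈ (Finset.univ : Finset ι).offDiag, h p.1 p.2
      = ∑ i, ∑ j, if i = j then 0 else h i j := by
  rw [offDiag_eq_filter, Finset.sum_filter, Finset.sum_product]
  refine Finset.sum_congr rfl fun i _ => Finset.sum_congr rfl fun j _ => ?_
  by_cases hij : i = j <;> simp [hij]

lemma sum_offDiag_swap {ι M : Type*} [Fintype ι] [DecidableEq ι] [AddCommMonoid M]
    (f : ι × ι → M) :
    ∑ p ∈ (Finset.univ : Finset ι).offDiag, f p
      = ∑ p ∈ (Finset.univ : Finset ι).offDiag, f p.swap := by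
  refine Finset.sum_nbij' Prod.swap Prod.swap ?_ ?_ ?_ ?_ ?_ <;>
    simp [Finset.mem_offDiag, eq_comm]

lemma sum_offDiag_nonneg {ι : Type*} [Fintype ι] [DecidableEq ι] (f : ι × ι → ℂ)
    (h : ∀ i j, i ≠ j → 0 ≤ f (i, j) + f (j, i)) :
    0 ≤ ∑ p ∈ (Finset.univ : Finset ι).offDiag, f p := by
  have h2 : 0 ≤ (∑ p ∈ (Finset.univ : Finset ι).offDiag, f p)
      + ∑ p ∈ (Finset.univ : Finset ι).offDiag, f p := by
    nth_rewrite 2 [sum_offDiag_swap]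
    rw [← Finset.sum_add_distrib]
    refine Finset.sum_nonneg fun p hp => ?_
    rw [Finset.mem_offDiag] at hp
    exact h p.1 p.2 hp.2.2
  rw [Complex.le_def] at h2 ⊢
  simp only [Complex.add_re, Complex.add_im, Complex.zero_re, Complex.zero_im] at h2 ⊢
  constructor <;> linarith [h2.1, h2.2]

lemma offdiag_sum_nonneg {ι : Type*} [Fintype ι] [DecidableEq ι]
    (δ : ι → ι → ℝ) (c : ι → ι → ℂ) (u : ι → ι → ℂ)
    (hδ : ∀ i j, i ≠ j → 0 ≤ δ i j)
    (hc : ∀ i j, i ≠ j → c j i = conj (c i j))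
    (h : ∀ i j, i ≠ j → ‖c i j‖ ^ 2 ≤ δ i j * δ j i) :
    0 ≤ ∑ p ∈ (Finset.univ : Finset ι).offDiag,
        ((δ p.1 p.2 : ℂ) * (conj (u p.1 p.2) * u p.1 p.2)
          + c p.1 p.2 * (conj (u p.1 p.2) * u p.2 p.1)) := by
  refine sum_offDiag_nonneg _ fun i j hij => ?_
  have := quad_nonneg (δ i j) (δ j i) (c i j) (u i j) (u j i)
    (hδ i j hij) (hδ j i hij.symm) (h i j hij)
  rw [hc i j hij]
  convert this using 1

variable {d : ℕ}

/-- Lift of a `d × d` matrix to the diagonal coordinates `(i,i)`. -/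
def liftE (M : Matrix (Fin d) (Fin d) ℂ) : Matrix (Fin d × Fin d) (Fin d × Fin d) ℂ :=
  Matrix.of fun p q => if p.1 = p.2 ∧ q.1 = q.2 then M p.1 q.1 else 0

/-- The off-diagonal-coordinate part: diagonal entries `A i j` at `(i,j)` and couplings
`C i j` between `(i,j)` and `(j,i)`. -/
def offE (A C : Matrix (Fin d) (Fin d) ℂ) : Matrix (Fin d × Fin d) (Fin d × Fin d) ℂ :=
  Matrix.of fun p q => if p.1 = p.2 then 0
    else if q = p then A p.1 p.2
    else if q = (p.2, p.1) then C p.1 p.2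
    else 0

lemma X3_split (A B C : Matrix (Fin d) (Fin d) ℂ) :
    X3 A B C = liftE (Matrix.of fun i j => if i = j then A i i else B i j) + offE A C := by
  ext ⟨i, k⟩ ⟨j, l⟩
  simp only [X3, liftE, offE, Matrix.of_apply, Matrix.add_apply, Prod.mk.injEq, Prod.ext_iff]
  by_cases h1 : i = k <;> by_cases h2 : j = l <;> by_cases h3 : i = j <;> by_cases h4 : k = l <;>
    by_cases h5 : i = l <;> by_cases h6 : k = j <;> simp_all <;> grind

lemma qf_liftE (M : Matrix (Fin d) (Fin d) ℂ) (x : Fin d × Fin d → ℂ) :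
    star x ⬝ᵥ liftE M *ᵥ x
      = star (fun i => x (i, i)) ⬝ᵥ M *ᵥ (fun i => x (i, i)) := by
  rw [qf_eq, qf_eq]
  simp only [liftE, Matrix.of_apply, Fintype.sum_prod_type, mul_ite, ite_mul, zero_mul,
    mul_zero, ite_and, Finset.sum_ite_irrel, Finset.sum_const_zero, Finset.sum_ite_eq,
    Finset.sum_ite_eq', Finset.mem_univ, if_true]

lemma sum_eq_diag_add {M' : Type*} [AddCommMonoid M'] {ι : Type*} [Fintype ι] [DecidableEq ι]
    (f : ι → M') (i : ι) :
    ∑ j, f j = f i + ∑ j, if i = j then 0 else f j := by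
  have : ∀ j, f j = (if i = j then f j else 0) + (if i = j then 0 else f j) := by
    intro j; split_ifs <;> simp
  rw [Finset.sum_congr rfl (fun j _ => this j), Finset.sum_add_distrib, Finset.sum_ite_eq,
    if_pos (Finset.mem_univ i)]

lemma liftE_posSemidef {M : Matrix (Fin d) (Fin d) ℂ} (hM : M.PosSemidef) :
    (liftE M).PosSemidef := by
  refine Matrix.PosSemidef.of_dotProduct_mulVec_nonneg ?_ ?_
  · ext ⟨i, k⟩ ⟨j, l⟩
    have hMh : ∀ a b, star (M b a) = M a b := fun a b => by
      conv_rhs => rw [← hM.1]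
      rfl
    simp only [liftE, Matrix.conjTranspose_apply, Matrix.of_apply]
    split_ifs with h1 h2 h2 <;> simp_all [hMh]
  · intro x
    rw [qf_liftE]
    exact hM.dotProduct_mulVec_nonneg _

lemma core_posSemidef (M : Matrix (Fin d) (Fin d) ℂ) (δ : Fin d → Fin d → ℝ)
    (hδ : ∀ i j, i ≠ j → 0 ≤ δ i j)
    (hdiag : ∀ i, M i i = ((∑ k, if i = k then 0 else δ i k : ℝ) : ℂ))
    (hherm : ∀ i j, M j i = conj (M i j))
    (hoff : ∀ i j, i ≠ j → ‖M i j‖ ^ 2 ≤ δ i j * δ j i) :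
    M.PosSemidef := by
  refine Matrix.PosSemidef.of_dotProduct_mulVec_nonneg ?_ ?_
  · ext i j
    rw [Matrix.conjTranspose_apply, hherm i j, RCLike.star_def, Complex.conj_conj]
  · intro y
    rw [qf_eq]
    have key : (∑ i, ∑ j, conj (y i) * M i j * y j)
        = ∑ p ∈ (Finset.univ : Finset (Fin d)).offDiag,
            ((δ p.1 p.2 : ℂ) * (conj (y p.1) * y p.1) + M p.1 p.2 * (conj (y p.1) * y p.2)) := by
      rw [sum_offDiag_eq (fun i j => (δ i j : ℂ) * (conj (y i) * y i) + M i j * (conj (y i) * y j))]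
      refine Finset.sum_congr rfl fun i _ => ?_
      rw [sum_eq_diag_add (fun j => conj (y i) * M i j * y j) i, hdiag i]
      push_cast
      rw [Finset.mul_sum, Finset.sum_mul, ← Finset.sum_add_distrib]
      refine Finset.sum_congr rfl fun j _ => ?_
      split_ifs <;> [simp; ring]
    rw [key]
    exact offdiag_sum_nonneg δ (fun i j => M i j) (fun i j => y i) hδ
      (fun i j hij => hherm i j) hoff

lemma offE_eq (A C : Matrix (Fin d) (Fin d) ℂ) (p q : Fin d × Fin d) :
    offE A C p q = if p.1 = p.2 then 0
      else ((if q = p then A p.1 p.2 else 0) + (if q = (p.2, p.1) then C p.1 p.2 else 0)) := by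
  simp only [offE, Matrix.of_apply]
  split_ifs with h1 h2 h3 h4 h5 <;> simp_all [Prod.ext_iff] <;> tauto

lemma qf_offE (A C : Matrix (Fin d) (Fin d) ℂ) (x : Fin d × Fin d → ℂ) :
    star x ⬝ᵥ offE A C *ᵥ x
      = ∑ p ∈ (Finset.univ : Finset (Fin d)).offDiag,
          (A p.1 p.2 * (conj (x p) * x p) + C p.1 p.2 * (conj (x p) * x (p.2, p.1))) := by
  rw [qf_eq]
  have inner : ∀ p : Fin d × Fin d,
      (∑ q, conj (x p) * offE A C p q * x q)
        = if p.1 = p.2 then 0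
          else (A p.1 p.2 * (conj (x p) * x p) + C p.1 p.2 * (conj (x p) * x (p.2, p.1))) := by
    intro p
    simp only [offE_eq, mul_ite, ite_mul, zero_mul, mul_zero, mul_add, add_mul,
      Finset.sum_ite_irrel, Finset.sum_const_zero, Finset.sum_add_distrib,
      Finset.sum_ite_eq', Finset.mem_univ, if_true]
    split_ifs <;> ring
  rw [Finset.sum_congr rfl (fun p _ => inner p)]
  have := sum_offDiag_eq (fun i j =>
    (A i j * (conj (x (i, j)) * x (i, j)) + C i j * (conj (x (i, j)) * x (j, i))))
  rw [Fintype.sum_prod_type]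
  rw [this]

lemma offE_posSemidef (A C : Matrix (Fin d) (Fin d) ℂ)
    (hA : ∀ i j, i ≠ j → A i j = ((A i j).re : ℂ) ∧ 0 ≤ (A i j).re)
    (hC : ∀ i j, i ≠ j → C j i = conj (C i j))
    (hAC : ∀ i j, i ≠ j → ‖C i j‖ ^ 2 ≤ (A i j).re * (A j i).re) :
    (offE A C).PosSemidef := by
  refine Matrix.PosSemidef.of_dotProduct_mulVec_nonneg ?_ ?_
  · have hA' : ∀ i j, i ≠ j → star (A i j) = A i j := fun i j h => by
      rw [(hA i j h).1]; exact Complex.conj_ofReal _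
    have hC' : ∀ i j, i ≠ j → star (C i j) = C j i := fun i j h => by
      rw [hC j i h.symm]; exact Complex.conj_conj _
    clear hA hC hAC
    ext ⟨i, k⟩ ⟨j, l⟩
    simp only [Matrix.conjTranspose_apply, offE, Matrix.of_apply]
    by_cases hik : i = k <;> by_cases hjl : j = l <;>
      by_cases h1 : i = j <;> by_cases h2 : k = l <;>
        by_cases h3 : i = l <;> by_cases h4 : k = j <;>
          simp_all [Prod.mk.injEq] <;> grind
  · intro x
    rw [qf_offE]
    have step : ∀ p ∈ (Finset.univ : Finset (Fin d)).offDiag,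
        (A p.1 p.2 * (conj (x p) * x p) + C p.1 p.2 * (conj (x p) * x (p.2, p.1)))
          = (((A p.1 p.2).re : ℂ) * (conj (x p) * x p)
              + C p.1 p.2 * (conj (x p) * x (p.2, p.1))) := by
      intro p hp
      rw [Finset.mem_offDiag] at hp
      rw [← (hA p.1 p.2 hp.2.2).1]
    rw [Finset.sum_congr rfl step]
    exact offdiag_sum_nonneg (fun i j => (A i j).re) (fun i j => C i j) (fun i j => x (i, j))
      (fun i j hij => (hA i j hij).2) hC hAC

lemma pt_X3 (A B C : Matrix (Fin d) (Fin d) ℂ) :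
    partialTranspose (X3 A B C) = X3 A C B := by
  ext ⟨i, k⟩ ⟨j, l⟩
  simp only [partialTranspose, X3, Matrix.of_apply]
  by_cases h1 : i = j <;> by_cases h2 : k = l <;> by_cases h3 : i = l <;> by_cases h4 : k = j <;>
    by_cases h5 : i = k <;> by_cases h6 : j = l <;>
      simp_all <;> first
        | (intro h; simp_all)
        | (split_ifs <;> simp_all)

lemma X3_add (A1 B1 C1 A2 B2 C2 : Matrix (Fin d) (Fin d) ℂ) :
    X3 A1 B1 C1 + X3 A2 B2 C2 = X3 (A1 + A2) (B1 + B2) (C1 + C2) := by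
  ext ⟨i, k⟩ ⟨j, l⟩
  simp only [X3, Matrix.of_apply, Matrix.add_apply]
  split_ifs <;> simp

lemma Phi3_apply (A B C Z : Matrix (Fin d) (Fin d) ℂ) (k l : Fin d) :
    Phi3 A B C Z k l = ∑ i, ∑ j, X3 A B C (k, i) (l, j) * Z i j := by
  rcases eq_or_ne k l with rfl | hkl
  · have step : ∀ i j : Fin d, X3 A B C (k, i) (k, j) * Z i j
        = if i = j then A k i * Z i i else 0 := by
      intro i j
      simp only [X3, Matrix.of_apply]
      split_ifs with hc1 hc2 hc3 <;> simp_all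
      exact absurd (hc3.1.symm.trans hc3.2) (by assumption)
    rw [Finset.sum_congr rfl fun i _ => Finset.sum_congr rfl fun j _ => step i j]
    simp [Phi3, Finset.sum_ite_eq, Matrix.hadamard, Matrix.diagonal]
  · have step : ∀ i j : Fin d, X3 A B C (k, i) (l, j) * Z i j
        = (if i = k ∧ j = l then B k l * Z i j else 0)
          + (if i = l ∧ j = k then C k l * Z i j else 0) := by
      intro i j
      simp only [X3, Matrix.of_apply]
      rw [if_neg (fun h => hkl h.1)]
      by_cases hb : k = i ∧ l = j
      · rw [if_pos hb, if_pos ⟨hb.1.symm, hb.2.symm⟩,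
          if_neg (fun (h : i = l ∧ j = k) => hkl (hb.1.trans h.1)), add_zero]
      · rw [if_neg hb]
        by_cases hcnd : k = j ∧ i = l
        · rw [if_pos hcnd, if_neg (fun (h : i = k ∧ j = l) => hb ⟨h.1.symm, h.2.symm⟩),
            if_pos ⟨hcnd.2, hcnd.1.symm⟩, zero_add]
        · rw [if_neg hcnd, if_neg (fun (h : i = k ∧ j = l) => hb ⟨h.1.symm, h.2.symm⟩),
            if_neg (fun (h : i = l ∧ j = k) => hcnd ⟨h.2.symm, h.1⟩), zero_mul, add_zero]
    rw [Finset.sum_congr rfl fun i _ => Finset.sum_congr rfl fun j _ => step i j]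
    simp only [Finset.sum_add_distrib, ite_and, Finset.sum_ite_irrel, Finset.sum_const_zero,
      Finset.sum_ite_eq, Finset.sum_ite_eq', Finset.mem_univ, if_true]
    simp [Phi3, Matrix.hadamard, Matrix.diagonal, hkl, Ne.symm hkl]

lemma sum_swap5 {α M' : Type*} [Fintype α] [AddCommMonoid M']
    (f : α → α → α → α → α → M') :
    ∑ k, ∑ l, ∑ i, ∑ j, ∑ r, f k l i j r = ∑ r, ∑ k, ∑ i, ∑ l, ∑ j, f k l i j r := by
  calc ∑ k, ∑ l, ∑ i, ∑ j, ∑ r, f k l i j r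
      = ∑ k, ∑ l, ∑ i, ∑ r, ∑ j, f k l i j r :=
        Finset.sum_congr rfl fun k _ => Finset.sum_congr rfl fun l _ =>
          Finset.sum_congr rfl fun i _ => Finset.sum_comm
    _ = ∑ k, ∑ l, ∑ r, ∑ i, ∑ j, f k l i j r :=
        Finset.sum_congr rfl fun k _ => Finset.sum_congr rfl fun l _ => Finset.sum_comm
    _ = ∑ k, ∑ r, ∑ l, ∑ i, ∑ j, f k l i j r :=
        Finset.sum_congr rfl fun k _ => Finset.sum_comm
    _ = ∑ r, ∑ k, ∑ l, ∑ i, ∑ j, f k l i j r := Finset.sum_comm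
    _ = ∑ r, ∑ k, ∑ i, ∑ l, ∑ j, f k l i j r :=
        Finset.sum_congr rfl fun r _ => Finset.sum_congr rfl fun k _ => Finset.sum_comm

lemma sum_swap5' {α M' : Type*} [Fintype α] [AddCommMonoid M']
    (f : α → α → α → α → α → M') :
    ∑ k, ∑ l, ∑ i, ∑ j, ∑ r, f k l i j r = ∑ r, ∑ k, ∑ j, ∑ l, ∑ i, f k l i j r := by
  calc ∑ k, ∑ l, ∑ i, ∑ j, ∑ r, f k l i j r
      = ∑ r, ∑ k, ∑ i, ∑ l, ∑ j, f k l i j r := sum_swap5 f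
    _ = ∑ r, ∑ k, ∑ i, ∑ j, ∑ l, f k l i j r :=
        Finset.sum_congr rfl fun r _ => Finset.sum_congr rfl fun k _ =>
          Finset.sum_congr rfl fun i _ => Finset.sum_comm
    _ = ∑ r, ∑ k, ∑ j, ∑ i, ∑ l, f k l i j r :=
        Finset.sum_congr rfl fun r _ => Finset.sum_congr rfl fun k _ => Finset.sum_comm
    _ = ∑ r, ∑ k, ∑ j, ∑ l, ∑ i, f k l i j r :=
        Finset.sum_congr rfl fun r _ => Finset.sum_congr rfl fun k _ =>
          Finset.sum_congr rfl fun j _ => Finset.sum_comm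

lemma pt_isHermitian {Q : Matrix (Fin d × Fin d) (Fin d × Fin d) ℂ} (h : Q.IsHermitian) :
    (partialTranspose Q).IsHermitian := by
  ext ⟨i, k⟩ ⟨j, l⟩
  have := congrFun (congrFun h (i, l)) (j, k)
  simp only [Matrix.conjTranspose_apply] at this ⊢
  simpa [partialTranspose] using this

open scoped MatrixOrder in
lemma exists_eq_conjTranspose_mul_self' {Z : Matrix (Fin d) (Fin d) ℂ} (hZ : Z.PosSemidef) :
    ∃ W : Matrix (Fin d) (Fin d) ℂ, Z = Wᴴ * W := by
  obtain ⟨X, hX, -, rfl⟩ := CFC.exists_sqrt_of_isSelfAdjoint_of_quasispectrumRestricts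
    hZ.isHermitian (QuasispectrumRestricts.nnreal_of_nonneg hZ.nonneg)
  refine ⟨X, ?_⟩
  rw [← Matrix.star_eq_conjTranspose, hX.star_eq]

lemma Phi3_posSemidef_of_decomp (A B C : Matrix (Fin d) (Fin d) ℂ)
    (P Q : Matrix (Fin d × Fin d) (Fin d × Fin d) ℂ)
    (hP : P.PosSemidef) (hQ : Q.PosSemidef)
    (hX : X3 A B C = P + partialTranspose Q)
    (Z : Matrix (Fin d) (Fin d) ℂ) (hZ : Z.PosSemidef) :
    (Phi3 A B C Z).PosSemidef := by
  obtain ⟨W, hW⟩ := exists_eq_conjTranspose_mul_self' hZ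
  have hZent : ∀ i j, Z i j = ∑ r, conj (W r i) * W r j := by
    intro i j
    rw [hW]
    simp [Matrix.mul_apply, Matrix.conjTranspose_apply]
  have hXh : (X3 A B C).IsHermitian := by
    rw [hX]; exact hP.1.add (pt_isHermitian hQ.1)
  have hXent : ∀ p q, conj (X3 A B C p q) = X3 A B C q p := by
    intro p q
    have := congrFun (congrFun hXh q) p
    simpa [Matrix.conjTranspose_apply] using this
  have hZent2 : ∀ i j, conj (Z i j) = Z j i := by
    intro i j
    have := congrFun (congrFun hZ.1 j) i
    simpa [Matrix.conjTranspose_apply] using this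
  refine Matrix.PosSemidef.of_dotProduct_mulVec_nonneg ?_ ?_
  · ext k l
    rw [Matrix.conjTranspose_apply, Phi3_apply, Phi3_apply]
    calc star (∑ i, ∑ j, X3 A B C (l, i) (k, j) * Z i j)
        = ∑ i, ∑ j, X3 A B C (k, j) (l, i) * Z j i := by
          rw [Complex.star_def, map_sum]
          refine Finset.sum_congr rfl fun i _ => ?_
          rw [map_sum]
          refine Finset.sum_congr rfl fun j _ => ?_
          rw [(starRingEnd ℂ).map_mul, hXent, hZent2]
      _ = ∑ i, ∑ j, X3 A B C (k, i) (l, j) * Z i j := Finset.sum_comm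
  · intro v
    rw [qf_eq]
    have expand : ∀ k l, Phi3 A B C Z k l
        = (∑ i, ∑ j, P (k, i) (l, j) * Z i j) + (∑ i, ∑ j, Q (k, j) (l, i) * Z i j) := by
      intro k l
      rw [Phi3_apply, hX]
      rw [← Finset.sum_add_distrib]
      refine Finset.sum_congr rfl fun i _ => ?_
      rw [← Finset.sum_add_distrib]
      refine Finset.sum_congr rfl fun j _ => ?_
      simp only [Matrix.add_apply, partialTranspose, Matrix.of_apply]
      ring
    calc (0 : ℂ) ≤ (∑ r, star (fun p : Fin d × Fin d => v p.1 * W r p.2) ⬝ᵥ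
            P *ᵥ (fun p : Fin d × Fin d => v p.1 * W r p.2))
          + (∑ r, star (fun p : Fin d × Fin d => v p.1 * conj (W r p.2)) ⬝ᵥ
            Q *ᵥ (fun p : Fin d × Fin d => v p.1 * conj (W r p.2))) := by
          refine add_nonneg (Finset.sum_nonneg fun r _ => hP.dotProduct_mulVec_nonneg _)
            (Finset.sum_nonneg fun r _ => hQ.dotProduct_mulVec_nonneg _)
      _ = ∑ k, ∑ l, conj (v k) * Phi3 A B C Z k l * v l := by
          have hsplit : ∑ k, ∑ l, conj (v k) * Phi3 A B C Z k l * v l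
              = (∑ k, ∑ l, conj (v k) * (∑ i, ∑ j, P (k, i) (l, j) * Z i j) * v l)
                + (∑ k, ∑ l, conj (v k) * (∑ i, ∑ j, Q (k, j) (l, i) * Z i j) * v l) := by
            simp only [expand, mul_add, add_mul, Finset.sum_add_distrib]
          have claimP : (∑ r, star (fun p : Fin d × Fin d => v p.1 * W r p.2) ⬝ᵥ
                P *ᵥ (fun p : Fin d × Fin d => v p.1 * W r p.2))
              = ∑ k, ∑ l, conj (v k) * (∑ i, ∑ j, P (k, i) (l, j) * Z i j) * v l := by
            conv_rhs => simp only [hZent, Finset.mul_sum, Finset.sum_mul]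
            rw [sum_swap5]
            refine Finset.sum_congr rfl fun r _ => ?_
            rw [qf_eq, Fintype.sum_prod_type]
            refine Finset.sum_congr rfl fun k _ => ?_
            refine Finset.sum_congr rfl fun i _ => ?_
            rw [Fintype.sum_prod_type]
            refine Finset.sum_congr rfl fun l _ => ?_
            refine Finset.sum_congr rfl fun j _ => ?_
            simp only [_root_.map_mul]
            ring
          have claimQ : (∑ r, star (fun p : Fin d × Fin d => v p.1 * conj (W r p.2)) ⬝ᵥ
                Q *ᵥ (fun p : Fin d × Fin d => v p.1 * conj (W r p.2)))
              = ∑ k, ∑ l, conj (v k) * (∑ i, ∑ j, Q (k, j) (l, i) * Z i j) * v l := by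
            conv_rhs => simp only [hZent, Finset.mul_sum, Finset.sum_mul]
            rw [sum_swap5']
            refine Finset.sum_congr rfl fun r _ => ?_
            rw [qf_eq, Fintype.sum_prod_type]
            refine Finset.sum_congr rfl fun k _ => ?_
            refine Finset.sum_congr rfl fun j _ => ?_
            rw [Fintype.sum_prod_type]
            refine Finset.sum_congr rfl fun l _ => ?_
            refine Finset.sum_congr rfl fun i _ => ?_
            simp only [_root_.map_mul, Complex.conj_conj]
            ring
          rw [hsplit, claimP, claimQ]

theorem stmt18' {d : ℕ} (hd : 2 ≤ d) (A B C : Matrix (Fin d) (Fin d) ℂ)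
    (hdiag : ∀ i, A i i = B i i ∧ A i i = C i i)
    (hA : ∀ i j, (A i j).im = 0 ∧ 0 ≤ (A i j).re)
    (hB : B.IsHermitian) (hC : C.IsHermitian)
    (hineq : ∀ i j, i ≠ j →
      0 ≤ Real.sqrt ((A i i).re * (A j j).re) / ((d : ℝ) - 1)
            + Real.sqrt ((A i j).re * (A j i).re)
            - ‖B i j‖ - ‖C i j‖) :
    (∃ P Q : Matrix (Fin d × Fin d) (Fin d × Fin d) ℂ,
        P.PosSemidef ∧ Q.PosSemidef ∧ X3 A B C = P + partialTranspose Q) ∧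
    (∀ Z : Matrix (Fin d) (Fin d) ℂ, Z.PosSemidef → (Phi3 A B C Z).PosSemidef) := by
  have hd2 : (2:ℝ) ≤ (d:ℝ) := by exact_mod_cast hd
  have hdpos : (0:ℝ) < (d:ℝ) - 1 := by linarith
  set a : Fin d → Fin d → ℝ := fun i j => (A i j).re with ha
  have hAeq : ∀ i j, A i j = ((a i j : ℝ) : ℂ) := by
    intro i j
    apply Complex.ext
    · simp [ha]
    · simp [ha, (hA i j).1]
  have ha0 : ∀ i j, 0 ≤ a i j := fun i j => (hA i j).2
  set al : Fin d → Fin d → ℝ := fun i j => Real.sqrt (a i i * a j j) / ((d:ℝ) - 1) with hal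
  set τ : Fin d → Fin d → ℝ := fun i j => Real.sqrt (a i j * a j i) with hτ
  set sf : Fin d → Fin d → ℝ := fun i j => al i j + τ i j with hsf
  set tA : Fin d → Fin d → ℝ := fun i j => al i j / sf i j with htA
  set tB : Fin d → Fin d → ℝ := fun i j => ‖B i j‖ / sf i j with htB
  set tC : Fin d → Fin d → ℝ := fun i j => ‖C i j‖ / sf i j with htC
  have hBent : ∀ i j, B j i = conj (B i j) := by
    intro i j
    have := congrFun (congrFun hB j) i
    rw [Matrix.conjTranspose_apply] at this
    exact this.symm
  have hCent : ∀ i j, C j i = conj (C i j) := by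
    intro i j
    have := congrFun (congrFun hC j) i
    rw [Matrix.conjTranspose_apply] at this
    exact this.symm
  have hBabs : ∀ i j, ‖B j i‖ = ‖B i j‖ := fun i j => by
    rw [hBent i j, Complex.norm_conj]
  have hCabs : ∀ i j, ‖C j i‖ = ‖C i j‖ := fun i j => by
    rw [hCent i j, Complex.norm_conj]
  have hal0 : ∀ i j, 0 ≤ al i j := fun i j =>
    div_nonneg (Real.sqrt_nonneg _) hdpos.le
  have hτ0 : ∀ i j, 0 ≤ τ i j := fun i j => Real.sqrt_nonneg _
  have hsf0 : ∀ i j, 0 ≤ sf i j := fun i j => add_nonneg (hal0 i j) (hτ0 i j)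
  have hal_sym : ∀ i j, al j i = al i j := fun i j => by
    simp only [hal]; rw [mul_comm]
  have hτ_sym : ∀ i j, τ j i = τ i j := fun i j => by
    simp only [hτ]; rw [mul_comm]
  have hsf_sym : ∀ i j, sf j i = sf i j := fun i j => by
    simp only [hsf]; rw [hal_sym, hτ_sym]
  have htA_sym : ∀ i j, tA j i = tA i j := fun i j => by
    simp only [htA]; rw [hal_sym, hsf_sym]
  have htC_sym : ∀ i j, tC j i = tC i j := fun i j => by
    simp only [htC]; rw [hCabs, hsf_sym]
  have hβγ : ∀ i j, i ≠ j → ‖B i j‖ + ‖C i j‖ ≤ sf i j := by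
    intro i j hij
    have := hineq i j hij
    simp only [hsf, hal, hτ, ha]
    linarith
  have htA0 : ∀ i j, 0 ≤ tA i j := fun i j => div_nonneg (hal0 i j) (hsf0 i j)
  have htB0 : ∀ i j, 0 ≤ tB i j := fun i j => div_nonneg (norm_nonneg _) (hsf0 i j)
  have htC0 : ∀ i j, 0 ≤ tC i j := fun i j => div_nonneg (norm_nonneg _) (hsf0 i j)
  have htA1 : ∀ i j, tA i j ≤ 1 := by
    intro i j
    rcases eq_or_lt_of_le (hsf0 i j) with hs | hs
    · simp only [htA, ← hs, div_zero]; norm_num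
    · rw [htA, div_le_one hs]
      simp only [hsf]
      linarith [hτ0 i j]
  have hsf_zero : ∀ i j, i ≠ j → sf i j = 0 →
      ‖B i j‖ = 0 ∧ ‖C i j‖ = 0 := by
    intro i j hij hs
    have h1 := hβγ i j hij
    constructor <;>
      nlinarith [norm_nonneg (B i j), norm_nonneg (C i j)]
  have htBtC : ∀ i j, i ≠ j → tB i j + tC i j ≤ 1 := by
    intro i j hij
    rcases eq_or_lt_of_le (hsf0 i j) with hs | hs
    · obtain ⟨h1, h2⟩ := hsf_zero i j hij hs.symm
      simp only [htB, htC, h1, h2, zero_div]; norm_num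
    · simp only [htB, htC]
      rw [← add_div, div_le_one hs]
      exact hβγ i j hij
  have htC1 : ∀ i j, i ≠ j → tC i j ≤ 1 := fun i j hij => by
    linarith [htBtC i j hij, htB0 i j]
  have hF5 : ∀ i j, i ≠ j → tA i j * ‖B i j‖ ≤ (1 - tC i j) * al i j := by
    intro i j hij
    have he : tA i j * ‖B i j‖ = tB i j * al i j := by
      simp only [htA, htB]; ring
    rw [he]
    exact mul_le_mul_of_nonneg_right (by linarith [htBtC i j hij, htC0 i j]) (hal0 i j)
  have hF8 : ∀ i j, tA i j * ‖C i j‖ = tC i j * al i j := by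
    intro i j; simp only [htA, htC]; ring
  have h1tA : ∀ i j, sf i j ≠ 0 → 1 - tA i j = τ i j / sf i j := by
    intro i j hs
    simp only [htA]
    rw [eq_div_iff hs, sub_mul, one_mul, div_mul_cancel₀ _ hs]
    simp only [hsf]; ring
  have hF6 : ∀ i j, i ≠ j → (1 - tA i j) * ‖C i j‖ ≤ tC i j * τ i j := by
    intro i j hij
    rcases eq_or_ne (sf i j) 0 with hs | hs
    · rw [(hsf_zero i j hij hs).2, mul_zero]
      exact mul_nonneg (htC0 i j) (hτ0 i j)
    · rw [h1tA i j hs]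
      refine le_of_eq ?_
      simp only [htC]; ring
  have hF7 : ∀ i j, i ≠ j → (1 - tA i j) * ‖B i j‖ ≤ (1 - tC i j) * τ i j := by
    intro i j hij
    rcases eq_or_ne (sf i j) 0 with hs | hs
    · rw [(hsf_zero i j hij hs).1, mul_zero]
      exact mul_nonneg (by linarith [htC1 i j hij]) (hτ0 i j)
    · rw [h1tA i j hs]
      have he : τ i j / sf i j * ‖B i j‖ = tB i j * τ i j := by
        simp only [htB]; ring
      rw [he]
      exact mul_le_mul_of_nonneg_right (by linarith [htBtC i j hij, htC0 i j]) (hτ0 i j)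
  have hal2 : ∀ i j, al i j * al i j = (a i i * a j j) / (((d:ℝ)-1) * ((d:ℝ)-1)) := by
    intro i j
    simp only [hal]
    rw [div_mul_div_comm, Real.mul_self_sqrt (mul_nonneg (ha0 i i) (ha0 j j))]
  have hτ2 : ∀ i j, τ i j * τ i j = a i j * a j i := by
    intro i j
    simp only [hτ]
    exact Real.mul_self_sqrt (mul_nonneg (ha0 i j) (ha0 j i))
  -- the matrices
  set AP : Matrix (Fin d) (Fin d) ℂ := Matrix.of fun i j =>
    if i = j then ((∑ k, if i = k then 0 else (1 - tC i k) * (a i i / ((d:ℝ)-1)) : ℝ) : ℂ)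
    else ((tC i j * a i j : ℝ) : ℂ) with hAP
  set AQ : Matrix (Fin d) (Fin d) ℂ := Matrix.of fun i j =>
    if i = j then ((∑ k, if i = k then 0 else tC i k * (a i i / ((d:ℝ)-1)) : ℝ) : ℂ)
    else (((1 - tC i j) * a i j : ℝ) : ℂ) with hAQ
  set BP : Matrix (Fin d) (Fin d) ℂ := Matrix.of fun i j =>
    ((tA i j : ℝ) : ℂ) * B i j with hBP
  set BQ : Matrix (Fin d) (Fin d) ℂ := Matrix.of fun i j =>
    ((1 - tA i j : ℝ) : ℂ) * B i j with hBQ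
  set CP : Matrix (Fin d) (Fin d) ℂ := Matrix.of fun i j =>
    ((1 - tA i j : ℝ) : ℂ) * C i j with hCP
  set CQ : Matrix (Fin d) (Fin d) ℂ := Matrix.of fun i j =>
    ((tA i j : ℝ) : ℂ) * C i j with hCQ
  -- decomposition identity
  have hconst : ∀ (c : ℝ) (i : Fin d), (∑ k, if i = k then 0 else c) = ((d:ℝ) - 1) * c := by
    intro c i
    have h1 : (∑ k : Fin d, if i = k then (0:ℝ) else c)
        = ∑ k : Fin d, (c - if i = k then c else 0) := by
      refine Finset.sum_congr rfl fun k _ => ?_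
      split_ifs <;> ring
    rw [h1, Finset.sum_sub_distrib, Finset.sum_const, Finset.sum_ite_eq,
      if_pos (Finset.mem_univ i), Finset.card_univ, Fintype.card_fin, nsmul_eq_mul]
    ring
  have hdecomp : X3 A B C = X3 AP BP CP + partialTranspose (X3 AQ CQ BQ) := by
    rw [pt_X3, X3_add]
    have e1 : AP + AQ = A := by
      ext i j
      simp only [hAP, hAQ, Matrix.add_apply, Matrix.of_apply]
      rcases eq_or_ne i j with rfl | hij
      · rw [if_pos rfl, if_pos rfl, hAeq]
        have h2 : (∑ k, if i = k then (0:ℝ) else (1 - tC i k) * (a i i / ((d:ℝ)-1)))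
            + (∑ k, if i = k then (0:ℝ) else tC i k * (a i i / ((d:ℝ)-1))) = a i i := by
          rw [← Finset.sum_add_distrib]
          have h3 : (∑ k, ((if i = k then (0:ℝ) else (1 - tC i k) * (a i i / ((d:ℝ)-1)))
              + (if i = k then (0:ℝ) else tC i k * (a i i / ((d:ℝ)-1)))))
              = ∑ k, if i = k then 0 else a i i / ((d:ℝ)-1) := by
            refine Finset.sum_congr rfl fun k _ => ?_
            split_ifs <;> ring
          rw [h3, hconst, mul_div_cancel₀ _ (ne_of_gt hdpos)]
        rw [← Complex.ofReal_add, h2]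
      · rw [if_neg hij, if_neg hij, hAeq, ← Complex.ofReal_add]
        norm_cast
        ring
    have e2 : BP + BQ = B := by
      ext i j
      simp only [hBP, hBQ, Matrix.add_apply, Matrix.of_apply]
      rw [← add_mul, ← Complex.ofReal_add]
      norm_num
    have e3 : CP + CQ = C := by
      ext i j
      simp only [hCP, hCQ, Matrix.add_apply, Matrix.of_apply]
      rw [← add_mul, ← Complex.ofReal_add]
      norm_num
    rw [e1, e2, e3]
  -- positivity of P
  have hPpsd : (X3 AP BP CP).PosSemidef := by
    rw [X3_split]
    refine Matrix.PosSemidef.add (liftE_posSemidef ?_) (offE_posSemidef _ _ ?_ ?_ ?_)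
    · refine core_posSemidef _ (fun i j => (1 - tC i j) * (a i i / ((d:ℝ)-1))) ?_ ?_ ?_ ?_
      · intro i j hij
        exact mul_nonneg (by linarith [htC1 i j hij]) (div_nonneg (ha0 i i) hdpos.le)
      · intro i
        simp [hAP]
      · intro i j
        rcases eq_or_ne i j with rfl | hij
        · simp only [Matrix.of_apply, eq_self_iff_true, if_true, hAP, Complex.conj_ofReal]
        · simp only [Matrix.of_apply, if_neg hij, if_neg (Ne.symm hij), hBP]
          rw [htA_sym, hBent i j, _root_.map_mul, Complex.conj_ofReal]
      · intro i j hij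
        simp only [Matrix.of_apply, if_neg hij, hBP]
        have habs : ‖((tA i j : ℝ) : ℂ) * B i j‖
            = tA i j * ‖B i j‖ := by
          rw [norm_mul, Complex.norm_real, Real.norm_eq_abs, abs_of_nonneg (htA0 i j)]
        rw [habs]
        have h2 : (tA i j * ‖B i j‖)^2 ≤ ((1 - tC i j) * al i j)^2 :=
          pow_le_pow_left₀ (mul_nonneg (htA0 i j) (norm_nonneg _)) (hF5 i j hij) 2
        refine h2.trans (le_of_eq ?_)
        rw [htC_sym i j]
        have h3 : ((1 - tC i j) * al i j)^2 = (1 - tC i j)^2 * (al i j * al i j) := by ring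
        rw [h3, hal2]
        field_simp
    · intro i j hij
      simp only [hAP, Matrix.of_apply, if_neg hij]
      exact ⟨by norm_num, by simpa using mul_nonneg (htC0 i j) (ha0 i j)⟩
    · intro i j hij
      simp only [hCP, Matrix.of_apply]
      rw [htA_sym, hCent i j, _root_.map_mul, Complex.conj_ofReal]
    · intro i j hij
      simp only [hAP, hCP, Matrix.of_apply, if_neg hij, if_neg (Ne.symm hij),
        Complex.ofReal_re]
      have habs : ‖((1 - tA i j : ℝ) : ℂ) * C i j‖
          = (1 - tA i j) * ‖C i j‖ := by
        rw [norm_mul, Complex.norm_real, Real.norm_eq_abs, abs_of_nonneg (by linarith [htA1 i j])]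
      rw [habs]
      have h2 : ((1 - tA i j) * ‖C i j‖)^2 ≤ (tC i j * τ i j)^2 :=
        pow_le_pow_left₀ (mul_nonneg (by linarith [htA1 i j]) (norm_nonneg _))
          (hF6 i j hij) 2
      refine h2.trans (le_of_eq ?_)
      rw [htC_sym i j]
      have h3 : (tC i j * τ i j)^2 = tC i j^2 * (τ i j * τ i j) := by ring
      rw [h3, hτ2]
      ring
  -- positivity of Q
  have hQpsd : (X3 AQ CQ BQ).PosSemidef := by
    rw [X3_split]
    refine Matrix.PosSemidef.add (liftE_posSemidef ?_) (offE_posSemidef _ _ ?_ ?_ ?_)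
    · refine core_posSemidef _ (fun i j => tC i j * (a i i / ((d:ℝ)-1))) ?_ ?_ ?_ ?_
      · intro i j hij
        exact mul_nonneg (htC0 i j) (div_nonneg (ha0 i i) hdpos.le)
      · intro i
        simp [hAQ]
      · intro i j
        rcases eq_or_ne i j with rfl | hij
        · simp only [Matrix.of_apply, eq_self_iff_true, if_true, hAQ, Complex.conj_ofReal]
        · simp only [Matrix.of_apply, if_neg hij, if_neg (Ne.symm hij), hCQ]
          rw [htA_sym, hCent i j, _root_.map_mul, Complex.conj_ofReal]
      · intro i j hij
        simp only [Matrix.of_apply, if_neg hij, hCQ]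
        have habs : ‖((tA i j : ℝ) : ℂ) * C i j‖
            = tA i j * ‖C i j‖ := by
          rw [norm_mul, Complex.norm_real, Real.norm_eq_abs, abs_of_nonneg (htA0 i j)]
        rw [habs, hF8 i j]
        refine le_of_eq ?_
        rw [htC_sym i j]
        have h3 : (tC i j * al i j)^2 = tC i j^2 * (al i j * al i j) := by ring
        rw [h3, hal2]
        field_simp
    · intro i j hij
      simp only [hAQ, Matrix.of_apply, if_neg hij]
      refine ⟨by norm_num, ?_⟩
      simpa using mul_nonneg (by linarith [htC1 i j hij]) (ha0 i j)
    · intro i j hij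
      simp only [hBQ, Matrix.of_apply]
      rw [htA_sym, hBent i j, _root_.map_mul, Complex.conj_ofReal]
    · intro i j hij
      simp only [hAQ, hBQ, Matrix.of_apply, if_neg hij, if_neg (Ne.symm hij),
        Complex.ofReal_re]
      have habs : ‖((1 - tA i j : ℝ) : ℂ) * B i j‖
          = (1 - tA i j) * ‖B i j‖ := by
        rw [norm_mul, Complex.norm_real, Real.norm_eq_abs, abs_of_nonneg (by linarith [htA1 i j])]
      rw [habs]
      have h2 : ((1 - tA i j) * ‖B i j‖)^2 ≤ ((1 - tC i j) * τ i j)^2 :=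
        pow_le_pow_left₀ (mul_nonneg (by linarith [htA1 i j]) (norm_nonneg _))
          (hF7 i j hij) 2
      refine h2.trans (le_of_eq ?_)
      rw [htC_sym i j]
      have h3 : ((1 - tC i j) * τ i j)^2 = (1 - tC i j)^2 * (τ i j * τ i j) := by ring
      rw [h3, hτ2]
      ring
  exact ⟨⟨X3 AP BP CP, X3 AQ CQ BQ, hPpsd, hQpsd, hdecomp⟩,
    fun Z hZ => Phi3_posSemidef_of_decomp A B C _ _ hPpsd hQpsd hdecomp Z hZ⟩

end Stmt18

theorem stmt18 {d : ℕ} (hd : 2 ≤ d) (A B C : Matrix (Fin d) (Fin d) ℂ)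
    (hdiag : ∀ i, A i i = B i i ∧ A i i = C i i)
    (hA : ∀ i j, (A i j).im = 0 ∧ 0 ≤ (A i j).re)
    (hB : B.IsHermitian) (hC : C.IsHermitian)
    (hineq : ∀ i j, i ≠ j →
      0 ≤ Real.sqrt ((A i i).re * (A j j).re) / ((d : ℝ) - 1)
            + Real.sqrt ((A i j).re * (A j i).re)
            - ‖B i j‖ - ‖C i j‖) :
    (∃ P Q : Matrix (Fin d × Fin d) (Fin d × Fin d) ℂ,
        P.PosSemidef ∧ Q.PosSemidef ∧ X3 A B C = P + partialTranspose Q) ∧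
    (∀ Z : Matrix (Fin d) (Fin d) ℂ, Z.PosSemidef → (Phi3 A B C Z).PosSemidef) :=
  Stmt18.stmt18' hd A B C hdiag hA hB hC hineq
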